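/- Let D be a squarefree positive integer with D ≠ 3. Suppose (t, r, q) parameterizes a complete family of pairing-friendly elliptic curves with embedding degree k = 3 and CM discriminant D such that r(x) = Φ_3(t(x) − 1) and deg q = deg r (i.e., ρ(t, r, q) = 1). Then every y ∈ ℚ[x] with D·y² = 4q − t² satisfies 2·deg y = deg t. -/

import Mathlib

open Polynomial

/-- `f ∈ ℚ[x]` represents integers: there is an integer `a` with `f(a) ∈ ℤ`. -/
def RepresentsIntegers (f : ℚ[X]) : Prop :=
  ∃ a n : ℤ, f.eval (a : ℚ) = (n : ℚ)

/-- `f ∈ ℚ[x]` represents primes: `f` is nonconstant, irreducible over `ℚ`,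
has positive leading coefficient, represents integers, and no prime number
divides every integer value `f(a)` with `a ∈ ℤ`, `f(a) ∈ ℤ`. -/
def RepresentsPrimes (f : ℚ[X]) : Prop :=
  0 < f.natDegree ∧ Irreducible f ∧ 0 < f.leadingCoeff ∧ RepresentsIntegers f ∧
    ∀ p : ℕ, p.Prime → ∃ a n : ℤ, f.eval (a : ℚ) = (n : ℚ) ∧ ¬ (p : ℤ) ∣ n

/-- `(t, r, q)` parameterizes a complete family of pairing-friendly elliptic curves
with embedding degree `k` and CM discriminant `D`:
(i) `r` represents primes; (ii) `q` represents primes; (iii) `r ∣ q + 1 - t`;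
(iv) `r ∣ Φ_k(t - 1)`; (v) `D·y² = 4q - t²` for some `y ∈ ℚ[x]`. -/
def IsCompleteFamily (k D : ℕ) (t r q : ℚ[X]) : Prop :=
  t ≠ 0 ∧ r ≠ 0 ∧ q ≠ 0 ∧
  RepresentsPrimes r ∧ RepresentsPrimes q ∧
  r ∣ (q + 1 - t) ∧
  r ∣ (cyclotomic k ℚ).comp (t - 1) ∧
  ∃ y : ℚ[X], (D : ℚ[X]) * y ^ 2 = 4 * q - t ^ 2

lemma aux_cyc3 : cyclotomic 3 ℚ = X^2 + X + 1 := by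
  rw [cyclotomic_prime ℚ 3]
  rw [Finset.sum_range_succ, Finset.sum_range_succ, Finset.sum_range_one]
  ring

lemma aux_sq3 (D : ℕ) (hD : Squarefree D) (h : IsSquare (3*D)) : D = 3 := by
  obtain ⟨k, hk⟩ := h
  have h3 : 3 ∣ k := by
    have h3p : (3:ℕ).Prime := by norm_num
    have : (3:ℕ) ∣ k * k := ⟨D, hk.symm⟩
    rcases (Nat.Prime.dvd_mul h3p).1 this with h | h <;> exact h
  obtain ⟨m, rfl⟩ := h3
  have hDm : D = 3 * (m * m) := by nlinarith [hk]
  have : IsUnit m := hD m ⟨3, by linarith [hDm]⟩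
  have hm1 : m = 1 := Nat.isUnit_iff.mp this
  rw [hm1] at hDm; omega

/-- Case `c = 1` is impossible: `D·y² = 3t²` would force `3D` to be a rational
square, hence `D = 3`. -/
lemma aux_c1 (D : ℕ) (hD : Squarefree D) (hD3 : D ≠ 3) (t y : ℚ[X])
    (ht0 : t ≠ 0)
    (hkey : (D : ℚ[X]) * y ^ 2 = C 3 * t ^ 2) : False := by
  have hyne : y ≠ 0 := by
    rintro rfl
    have h0 : C (3:ℚ) * t ^ 2 = 0 := by rw [← hkey]; ring
    rcases mul_eq_zero.mp h0 with h | h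
    · exact absurd h (by simp)
    · exact ht0 (pow_eq_zero_iff (by norm_num) |>.mp h)
  have hly : y.leadingCoeff ≠ 0 := leadingCoeff_ne_zero.mpr hyne
  have hlc : (D:ℚ) * y.leadingCoeff ^ 2 = 3 * t.leadingCoeff ^ 2 := by
    have := congrArg leadingCoeff hkey
    rwa [show ((D:ℕ) : ℚ[X]) = C ((D:ℕ):ℚ) from (C_eq_natCast D).symm,
      leadingCoeff_mul, leadingCoeff_mul, leadingCoeff_C, leadingCoeff_pow,
      leadingCoeff_pow, leadingCoeff_C] at this
  set w : ℚ := 3 * t.leadingCoeff / y.leadingCoeff with hw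
  have hw2 : ((3 * D : ℕ) : ℚ) = w * w := by
    rw [hw]; field_simp; push_cast; nlinarith [hlc]
  have : IsSquare ((3 * D : ℕ) : ℚ) := ⟨w, hw2⟩
  exact hD3 (aux_sq3 D hD (Rat.isSquare_natCast_iff.mp this))

/-- Case `c ∉ {0, 1/4, 1}` is impossible: completing the square and passing to
the algebraic closure factors a nonzero constant as a product of nonconstant
polynomials. -/
lemma aux_generic (D : ℕ) (t y : ℚ[X]) (c : ℚ)
    (hn1 : 1 ≤ t.natDegree)
    (hcne : c ≠ 0) (hc14 : 4*c - 1 ≠ 0) (hc1 : c ≠ 1)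
    (hkey : (D : ℚ[X]) * y ^ 2 =
      (4 * C c - 1) * t^2 + (4 - 4 * C c) * t + (4 * C c - 4)) : False := by
  set E : ℚ[X] := C (2*(4*c-1)) * t + C (4-4*c) with hE
  have hid : E^2 - C (4*(4*c-1)*(D:ℚ)) * y^2 = C ((4-4*c)^2 + 4*(4*c-1)*(4-4*c)) := by
    rw [hE]
    simp only [map_mul, map_sub, map_add, map_pow, map_one, map_ofNat,
      C_eq_natCast]
    linear_combination (-4*(4*(C c)-1)) * hkey
  have hconst : ((4-4*c)^2 + 4*(4*c-1)*(4-4*c) : ℚ) ≠ 0 := by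
    intro h0
    have h1 : (4-4*c) * (12*c) = 0 := by linear_combination h0
    rcases mul_eq_zero.mp h1 with h | h
    · exact hc1 (by linarith)
    · exact hcne (by linarith)
  set K := AlgebraicClosure ℚ
  set φ : ℚ →+* K := (algebraMap ℚ K)
  obtain ⟨e, he⟩ := IsAlgClosed.exists_pow_nat_eq (k := K) (φ (4*(4*c-1)*(D:ℚ))) two_pos
  set S : K[X] := E.map φ with hS
  set Y : K[X] := y.map φ with hY
  have h2 : (C e)^2 = C (φ (4*(4*c-1)*(D:ℚ))) := by rw [← map_pow, he]
  have hmap := congrArg (Polynomial.map φ) hid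
  simp only [Polynomial.map_sub, Polynomial.map_mul, Polynomial.map_pow, map_C] at hmap
  have hfac : (S - C e * Y) * (S + C e * Y)
      = C (φ ((4-4*c)^2 + 4*(4*c-1)*(4-4*c))) := by
    rw [hS, hY]
    linear_combination hmap - (y.map φ)^2 * h2
  have hrhs : (C (φ ((4-4*c)^2 + 4*(4*c-1)*(4-4*c))) : K[X]) ≠ 0 := by
    simp only [ne_eq, C_eq_zero]
    exact fun h => hconst ((_root_.map_eq_zero φ).mp h)
  have hf1 : S - C e * Y ≠ 0 := fun h => hrhs (by rw [← hfac, h, zero_mul])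
  have hf2 : S + C e * Y ≠ 0 := fun h => hrhs (by rw [← hfac, h, mul_zero])
  have hsum : (S - C e * Y).natDegree + (S + C e * Y).natDegree = 0 := by
    rw [← natDegree_mul hf1 hf2, hfac, natDegree_C]
  have hSdeg : S.natDegree = 0 := by
    have h3 : (2 : K[X]) * S = (S - C e * Y) + (S + C e * Y) := by ring
    have h4 : ((2:K[X]) * S).natDegree ≤ 0 := by
      rw [h3]
      exact le_trans (natDegree_add_le _ _) (by omega)
    rwa [show (2 : K[X]) = C 2 from (map_ofNat C 2).symm,
      natDegree_C_mul (by norm_num : (2:K) ≠ 0), Nat.le_zero] at h4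
  have hEdeg : E.natDegree = t.natDegree := by
    rw [hE, natDegree_add_C, natDegree_C_mul (by simpa using hc14 ∘ (by intro h; linarith))]
  have : S.natDegree = t.natDegree := by
    rw [hS, natDegree_map, hEdeg]
  omega

/-- Lemma 3.1 for `k = 3`: in an ideal family with `r = Φ_3(t - 1)` and `D ≠ 3`,
any CM polynomial `y` satisfies `2 deg y = deg t`. -/
theorem deg_y_k3 (D : ℕ) (hD : Squarefree D) (hDpos : 0 < D) (hD3 : D ≠ 3)
    (t r q : ℚ[X]) (h : IsCompleteFamily 3 D t r q)
    (hr : r = (cyclotomic 3 ℚ).comp (t - 1))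
    (hdeg : q.natDegree = r.natDegree) :
    ∀ y : ℚ[X], (D : ℚ[X]) * y ^ 2 = 4 * q - t ^ 2 → 2 * y.natDegree = t.natDegree := by
  intro y hy
  obtain ⟨ht0, hr0, hq0, hrp, hqp, hdvd, -, -⟩ := h
  set n := t.natDegree with hn
  have hr' : r = t^2 - t + 1 := by
    rw [hr, aux_cyc3]
    simp only [comp, eval₂_add, eval₂_mul, eval₂_pow, eval₂_X, eval₂_one]
    ring
  have hrdeg : r.natDegree = 2 * n := by
    rw [hr, natDegree_comp, natDegree_cyclotomic]
    have : (t - 1).natDegree = n := by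
      rw [show (1 : ℚ[X]) = C 1 from (map_one C).symm, natDegree_sub_C]
    rw [this]; rfl
  have hn1 : 1 ≤ n := by
    have := hrp.1
    omega
  obtain ⟨H, hH⟩ := hdvd
  have hq1t : q + 1 - t ≠ 0 := by
    intro h0
    have hq' : q = t - 1 := by linear_combination h0
    have : q.natDegree = n := by
      rw [hq', show (1 : ℚ[X]) = C 1 from (map_one C).symm, natDegree_sub_C]
    omega
  have hHdeg : H.natDegree = 0 := by
    have hHne : H ≠ 0 := by rintro rfl; simp at hH; exact hq1t hH
    have h1 : (q + 1 - t).natDegree ≤ 2 * n := by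
      calc (q + 1 - t).natDegree = (q + (1 - t)).natDegree := by ring_nf
        _ ≤ max q.natDegree (1 - t).natDegree := natDegree_add_le _ _
        _ ≤ 2 * n := by
            apply max_le (by omega)
            calc (1-t).natDegree ≤ max (1:ℚ[X]).natDegree t.natDegree := natDegree_sub_le _ _
              _ ≤ 2 * n := by simp [natDegree_one]; omega
    rw [hH, natDegree_mul hr0 hHne, hrdeg] at h1
    omega
  obtain ⟨c, hc⟩ := natDegree_eq_zero.mp hHdeg
  have hcne : c ≠ 0 := by rintro rfl; simp at hc; rw [← hc] at hH; simp at hH; exact hq1t hH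
  have hq' : q = (t^2 - t + 1) * C c + t - 1 := by
    have : q + 1 - t = r * C c := by rw [hH, hc]
    rw [hr'] at this; linear_combination this
  have hkey : (D : ℚ[X]) * y ^ 2 =
      (4 * C c - 1) * t^2 + (4 - 4 * C c) * t + (4 * C c - 4) := by
    rw [hy, hq']; ring
  rcases eq_or_ne c (1/4) with hc14 | hc14
  · -- the good case: D y² = 3(t - 1)
    have hC : (C (1/4 : ℚ) : ℚ[X]) * 4 = 1 := by
      rw [show (4:ℚ[X]) = C 4 from (map_ofNat C 4).symm, ← C_mul]; norm_num
    have hkey' : (D : ℚ[X]) * y ^ 2 = C 3 * (t - 1) := by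
      rw [hkey, hc14, show (C (3:ℚ) : ℚ[X]) = 3 from map_ofNat C 3]
      linear_combination (t^2 - t + 1) * hC
    have hyne : y ≠ 0 := by
      rintro rfl
      have h0 : C (3:ℚ) * (t - 1) = 0 := by rw [← hkey']; ring
      rcases mul_eq_zero.mp h0 with h' | h'
      · exact absurd h' (by simp)
      · have ht1 : t = 1 := by linear_combination h'
        rw [hn, ht1] at hn1; simp at hn1
    have hDne : ((D:ℚ)) ≠ 0 := by positivity
    have h1 : ((D : ℚ[X]) * y ^ 2).natDegree = 2 * y.natDegree := by
      rw [show ((D:ℕ) : ℚ[X]) = C ((D:ℕ):ℚ) from (C_eq_natCast D).symm,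
        natDegree_C_mul hDne, natDegree_pow]
    have h2 : (C (3:ℚ) * (t - 1)).natDegree = n := by
      rw [natDegree_C_mul (by norm_num : (3:ℚ) ≠ 0),
        show (1 : ℚ[X]) = C 1 from (map_one C).symm, natDegree_sub_C]
    rw [← h1, hkey', h2]
  · rcases eq_or_ne c 1 with hc1 | hc1
    · -- impossible: D y² = 3 t²
      exfalso
      have hkey' : (D : ℚ[X]) * y ^ 2 = C 3 * t ^ 2 := by
        rw [hkey, hc1, map_one, show (C (3:ℚ) : ℚ[X]) = 3 from map_ofNat C 3]
        ring
      exact aux_c1 D hD hD3 t y ht0 hkey'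
    · -- impossible: completing the square
      exfalso
      exact aux_generic D t y c hn1 hcne (by intro h0; exact hc14 (by linarith)) hc1 hkey
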